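/- Let 0<α<1 and let (ω_n^{−1})_{n≥0} be the coefficients of the multiplicative inverse of the formal power series ω(ξ) = Σ_{n≥0} ω_n ξ^n. Then ω_0^{−1} > 0, ω_n^{−1} < 0 for every n ≥ 1, and ω_0^{−1} = Γ(α+1) = Σ_{n=1}^∞ |ω_n^{−1}|. -/

import Mathlib

open Real

/-- Midpoint quadrature weights `ω_m = ((m+1)^α − m^α)/Γ(α+1)`. -/
noncomputable def omegaW (α : ℝ) (m : ℕ) : ℝ :=
  (((m : ℝ) + 1) ^ α - (m : ℝ) ^ α) / Real.Gamma (α + 1)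

/-- Coefficients `ω_n^{−1}` of the multiplicative inverse of the formal power
series `ω(ξ) = Σ_{n≥0} ω_n ξ^n`. -/
noncomputable def omegaInv (α : ℝ) (n : ℕ) : ℝ :=
  PowerSeries.coeff n (PowerSeries.mk (omegaW α))⁻¹

open intervalIntegral MeasureTheory

section
variable {α : ℝ}

/-- the integrand -/
private noncomputable def gg (α : ℝ) (t : ℝ) : ℝ := α * t ^ (α - 1)

private lemma gg_intble (hα0 : 0 < α) (d : ℝ) :
    IntervalIntegrable (fun s => gg α (d + s)) volume 0 1 := by
  have h : IntervalIntegrable (fun x : ℝ => x ^ (α - 1)) volume d (d + 1) :=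
    intervalIntegrable_rpow' (by linarith)
  have h2 := (h.comp_add_left d)
  simpa [gg, sub_self, add_sub_cancel_left] using h2.const_mul α

private lemma gg_integral (hα0 : 0 < α) (d : ℝ) :
    ∫ s in (0:ℝ)..1, gg α (d + s) = (d + 1) ^ α - d ^ α := by
  have h1 : (∫ s in (0:ℝ)..1, gg α (d + s)) = ∫ u in (d+0)..(d+1), gg α u := by
    exact intervalIntegral.integral_comp_add_left (gg α) d
  rw [h1]
  have h2 : (∫ u in (d+0)..(d+1), gg α u) = α * ∫ u in (d+0)..(d+1), u ^ (α-1) := by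
    simpa [gg] using intervalIntegral.integral_const_mul α (fun u : ℝ => u ^ (α-1))
  rw [h2, integral_rpow (Or.inl (by linarith))]
  have : α - 1 + 1 = α := by ring
  rw [this]
  field_simp
  simp only [add_zero]

private lemma gg_nonneg (hα0 : 0 < α) {t : ℝ} (ht : 0 ≤ t) : 0 ≤ gg α t := by
  unfold gg
  positivity

private lemma gg_logcvx (hα0 : 0 < α) (hα1 : α < 1) {c u : ℝ} (hc : 0 ≤ c) (hu : 0 < u) :
    gg α (c + 1 + u) * gg α (c + 1 + u) ≤ gg α (c + u) * gg α (c + 2 + u) := by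
  unfold gg
  have h1 : 0 < c + u := by linarith
  have h2 : 0 < c + 2 + u := by linarith
  have h3 : 0 < c + 1 + u := by linarith
  have key : (c + 1 + u) ^ (α-1) * (c + 1 + u) ^ (α-1) ≤ (c + u) ^ (α-1) * (c + 2 + u) ^ (α-1) := by
    rw [← Real.mul_rpow h1.le h2.le, ← Real.rpow_add h3]
    have e1 : (c + 1 + u) ^ (α - 1 + (α - 1)) = ((c + 1 + u) * (c + 1 + u)) ^ (α - 1) := by
      rw [Real.mul_rpow h3.le h3.le, ← Real.rpow_add h3]
    rw [e1]
    apply Real.rpow_le_rpow_of_nonpos (by nlinarith) (by nlinarith) (by linarith)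
  have hα2 : 0 < α * α := mul_pos hα0 hα0
  nlinarith [Real.rpow_nonneg h3.le (α-1), Real.rpow_nonneg h1.le (α-1), Real.rpow_nonneg h2.le (α-1), mul_le_mul_of_nonneg_left key (le_of_lt hα2)]

end

section
variable {α : ℝ}

private lemma ae_pos_Icc : ∀ᵐ t : ℝ ∂(MeasureTheory.volume.restrict (Set.Icc (0:ℝ) 1)), 0 < t := by
  have h0 : ∀ᵐ t : ℝ ∂(MeasureTheory.volume), t ≠ 0 := by
    rw [MeasureTheory.ae_iff]
    simpa using Real.volume_singleton
  have h1 := MeasureTheory.ae_restrict_of_ae (μ := MeasureTheory.volume)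
    (s := Set.Icc (0:ℝ) 1) h0
  have h2 := MeasureTheory.ae_restrict_mem (μ := MeasureTheory.volume) (measurableSet_Icc (a := (0:ℝ)) (b := 1))
  filter_upwards [h1, h2] with t hne hmem
  exact lt_of_le_of_ne hmem.1 (Ne.symm hne)

private lemma amgm {x y p q : ℝ} (hx : 0 ≤ x) (hy : 0 ≤ y) (hp : 0 ≤ p) (hq : 0 ≤ q)
    (h : (p*q)^2 ≤ x*y) : 2*(p*q) ≤ x + y := by
  nlinarith [sq_nonneg (x-y), sq_nonneg (x+y), mul_nonneg hx hy, mul_nonneg hp hq]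

private lemma A_logcvx (hα0 : 0 < α) (hα1 : α < 1) {c : ℝ} (hc : 0 ≤ c) :
    ((c+1+1)^α - (c+1)^α) * ((c+1+1)^α - (c+1)^α)
      ≤ ((c+1)^α - c^α) * ((c+2+1)^α - (c+2)^α) := by
  set A0 : ℝ := (c+1)^α - c^α with hA0def
  set A1 : ℝ := (c+1+1)^α - (c+1)^α with hA1def
  set A2 : ℝ := (c+2+1)^α - (c+2)^α with hA2def
  have i0 := gg_intble hα0 (α := α) c
  have i1 := gg_intble hα0 (α := α) (c+1)
  have i2 := gg_intble hα0 (α := α) (c+2)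
  have key : ∀ (K0 K1 K2 : ℝ), (∫ t in (0:ℝ)..1, (K2 * gg α (c+2+t) + K0 * gg α (c+t)
      - K1 * gg α (c+1+t))) = K2 * A2 + K0 * A0 - K1 * A1 := by
    intro K0 K1 K2
    rw [intervalIntegral.integral_sub ((i2.const_mul K2).add (i0.const_mul K0)) (i1.const_mul K1),
        intervalIntegral.integral_add (i2.const_mul K2) (i0.const_mul K0),
        intervalIntegral.integral_const_mul, intervalIntegral.integral_const_mul,
        intervalIntegral.integral_const_mul,
        gg_integral hα0, gg_integral hα0, gg_integral hα0]
  -- inner inequality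
  have inner : ∀ s : ℝ, 0 < s →
      0 ≤ gg α (c+s) * A2 + gg α (c+2+s) * A0 - 2 * gg α (c+1+s) * A1 := by
    intro s hs
    have hval := key (gg α (c+2+s)) (2 * gg α (c+1+s)) (gg α (c+s))
    have hgoal : gg α (c+s) * A2 + gg α (c+2+s) * A0 - 2 * gg α (c+1+s) * A1
        = ∫ t in (0:ℝ)..1, (gg α (c+s) * gg α (c+2+t) + gg α (c+2+s) * gg α (c+t)
            - 2 * gg α (c+1+s) * gg α (c+1+t)) := by
      rw [hval]
    rw [hgoal]
    apply intervalIntegral.integral_nonneg_of_ae_restrict (by norm_num)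
    filter_upwards [ae_pos_Icc] with t ht
    simp only [Pi.zero_apply]
    have hgs0 := gg_nonneg hα0 (α := α) (t := c + s) (by linarith)
    have hgs1 := gg_nonneg hα0 (α := α) (t := c + 1 + s) (by linarith)
    have hgs2 := gg_nonneg hα0 (α := α) (t := c + 2 + s) (by linarith)
    have hgt0 := gg_nonneg hα0 (α := α) (t := c + t) (by linarith)
    have hgt1 := gg_nonneg hα0 (α := α) (t := c + 1 + t) (by linarith)
    have hgt2 := gg_nonneg hα0 (α := α) (t := c + 2 + t) (by linarith)
    have hP := gg_logcvx hα0 hα1 hc hs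
    have hQ := gg_logcvx hα0 hα1 hc ht
    have h1 : (gg α (c+1+s) * gg α (c+1+t))^2
        ≤ (gg α (c+s) * gg α (c+2+t)) * (gg α (c+2+s) * gg α (c+t)) := by
      nlinarith [mul_nonneg hgs1 hgs1, mul_nonneg hgt1 hgt1]
    have h2 := amgm (mul_nonneg hgs0 hgt2) (mul_nonneg hgs2 hgt0) hgs1 hgt1 h1
    linarith
  -- outer integral
  have key2 : (∫ s in (0:ℝ)..1, (gg α (c+s) * A2 + gg α (c+2+s) * A0
      - 2 * gg α (c+1+s) * A1)) = A0 * A2 + A2 * A0 - 2 * A1 * A1 := by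
    rw [intervalIntegral.integral_sub ((i0.mul_const A2).add (i2.mul_const A0))
          ((i1.const_mul 2).mul_const A1),
        intervalIntegral.integral_add (i0.mul_const A2) (i2.mul_const A0),
        intervalIntegral.integral_mul_const, intervalIntegral.integral_mul_const,
        intervalIntegral.integral_mul_const, intervalIntegral.integral_const_mul,
        gg_integral hα0, gg_integral hα0, gg_integral hα0]
  have houter : (0:ℝ) ≤ A0 * A2 + A2 * A0 - 2 * A1 * A1 := by
    rw [← key2]
    apply intervalIntegral.integral_nonneg_of_ae_restrict (by norm_num)
    filter_upwards [ae_pos_Icc] with s hs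
    simpa using inner s hs
  linarith

end

section
variable {α : ℝ}

private lemma G_pos (hα0 : 0 < α) : 0 < Real.Gamma (α+1) :=
  Real.Gamma_pos_of_pos (by linarith)

private lemma omegaW_pos (hα0 : 0 < α) (m : ℕ) : 0 < omegaW α m := by
  unfold omegaW
  apply div_pos _ (G_pos hα0)
  have h : (m:ℝ) < (m:ℝ)+1 := by linarith
  have := Real.rpow_lt_rpow (by positivity) h hα0
  linarith

private lemma omegaW_zero (hα0 : 0 < α) : omegaW α 0 = 1 / Real.Gamma (α+1) := by
  unfold omegaW
  norm_num [Real.zero_rpow hα0.ne', Real.one_rpow]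

private lemma omegaW_logcvx (hα0 : 0 < α) (hα1 : α < 1) (k : ℕ) :
    omegaW α (k+1) * omegaW α (k+1) ≤ omegaW α k * omegaW α (k+2) := by
  have h := A_logcvx hα0 hα1 (c := (k:ℝ)) (by positivity)
  unfold omegaW
  push_cast
  rw [div_mul_div_comm, div_mul_div_comm]
  gcongr

private lemma subadd (hα0 : 0 < α) (hα1 : α < 1) {x : ℝ} (hx : 0 ≤ x) :
    (x+1)^α ≤ x^α + 1 := by
  have CC := Real.concaveOn_rpow hα0.le hα1.le
  have hx1 : (0:ℝ) < x + 1 := by linarith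
  have h1 := CC.2 (Set.mem_Ici.2 le_rfl) (Set.mem_Ici.2 (by linarith : (0:ℝ) ≤ x+1))
    (by positivity : (0:ℝ) ≤ x/(x+1)) (by positivity : (0:ℝ) ≤ 1/(x+1)) (by field_simp <;> ring)
  have h2 := CC.2 (Set.mem_Ici.2 le_rfl) (Set.mem_Ici.2 (by linarith : (0:ℝ) ≤ x+1))
    (by positivity : (0:ℝ) ≤ 1/(x+1)) (by positivity : (0:ℝ) ≤ x/(x+1)) (by field_simp <;> ring)
  simp only [smul_eq_mul, mul_zero, zero_add, Real.zero_rpow hα0.ne'] at h1 h2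
  have e1 : 1/(x+1) * (x+1) = 1 := by field_simp
  have e2 : x/(x+1) * (x+1) = x := by field_simp
  rw [e1, Real.one_rpow] at h1
  rw [e2] at h2
  have : (x+1)^α = 1/(x+1) * (x+1)^α + x/(x+1) * (x+1)^α := by field_simp; ring
  linarith

private lemma omegaW_le (hα0 : 0 < α) (hα1 : α < 1) (k : ℕ) :
    omegaW α k ≤ omegaW α 0 := by
  rw [omegaW_zero hα0]
  unfold omegaW
  gcongr
  have := subadd hα0 hα1 (x := (k:ℝ)) (by positivity)
  push_cast
  linarith

end

section
variable {α : ℝ}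

private lemma strict0 (hα0 : 0 < α) (hα1 : α < 1) :
    omegaW α 1 * omegaW α 1 < omegaW α 0 * omegaW α 2 := by
  have SC := Real.strictConcaveOn_rpow hα0 hα1
  have h2 : (2:ℝ)/3 * (1:ℝ)^α + (1:ℝ)/3 * (4:ℝ)^α < (2:ℝ)^α := by
    have := SC.2 (Set.mem_Ici.2 (by norm_num : (0:ℝ) ≤ 1))
      (Set.mem_Ici.2 (by norm_num : (0:ℝ) ≤ 4)) (by norm_num)
      (by norm_num : (0:ℝ) < 2/3) (by norm_num : (0:ℝ) < 1/3) (by norm_num)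
    simp only [smul_eq_mul] at this
    norm_num at this
    simpa using this
  have h3 : (1:ℝ)/3 * (1:ℝ)^α + (2:ℝ)/3 * (4:ℝ)^α < (3:ℝ)^α := by
    have := SC.2 (Set.mem_Ici.2 (by norm_num : (0:ℝ) ≤ 1))
      (Set.mem_Ici.2 (by norm_num : (0:ℝ) ≤ 4)) (by norm_num)
      (by norm_num : (0:ℝ) < 1/3) (by norm_num : (0:ℝ) < 2/3) (by norm_num)
    simp only [smul_eq_mul] at this
    norm_num at this
    simpa using this
  have h4 : (4:ℝ)^α = 2^α * 2^α := by
    rw [← Real.mul_rpow (by norm_num) (by norm_num)]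
    norm_num
  rw [Real.one_rpow] at h2 h3
  have hsum : (4:ℝ)^α + 1 < 3^α + 2^α := by linarith
  have hw0 : omegaW α 0 = 1 / Real.Gamma (α+1) := omegaW_zero hα0
  have hw1 : omegaW α 1 = ((2:ℝ)^α - 1^α) / Real.Gamma (α+1) := by
    unfold omegaW; norm_num
  have hw2 : omegaW α 2 = ((3:ℝ)^α - 2^α) / Real.Gamma (α+1) := by
    unfold omegaW; norm_num
  rw [hw0, hw1, hw2, Real.one_rpow, div_mul_div_comm, div_mul_div_comm]
  have hG2 : (0:ℝ) < Real.Gamma (α+1) * Real.Gamma (α+1) := mul_pos (G_pos hα0) (G_pos hα0)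
  rw [div_lt_div_iff₀ hG2 hG2]
  nlinarith [h4, hsum, hG2]

private lemma cross (hα0 : 0 < α) (hα1 : α < 1) :
    ∀ m j, j ≤ m → omegaW α (j+1) * omegaW α m ≤ omegaW α j * omegaW α (m+1) := by
  intro m
  induction m with
  | zero =>
    intro j hj
    interval_cases j
    exact le_of_eq (mul_comm _ _)
  | succ m ih =>
    intro j hj
    rcases eq_or_lt_of_le hj with rfl | hlt
    · exact le_of_eq (mul_comm _ _)
    · have hjm : j ≤ m := by omega
      have h1 := ih j hjm
      have h2 := omegaW_logcvx hα0 hα1 m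
      have p0 := omegaW_pos hα0 j
      have p1 := omegaW_pos hα0 (j+1)
      have p2 := omegaW_pos hα0 m
      have p3 := omegaW_pos hα0 (m+1)
      have p4 := omegaW_pos hα0 (m+2)
      nlinarith [mul_le_mul_of_nonneg_left h2 p1.le, mul_le_mul_of_nonneg_right h1 p4.le]

private lemma cross1 (hα0 : 0 < α) (hα1 : α < 1) {m : ℕ} (hm : 1 ≤ m) :
    omegaW α m * omegaW α 1 < omegaW α (m+1) * omegaW α 0 := by
  have hc := cross hα0 hα1 m 1 hm
  have hs := strict0 hα0 hα1
  have p0 := omegaW_pos hα0 0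
  have p1 := omegaW_pos hα0 1
  have p2 := omegaW_pos hα0 2
  have pm := omegaW_pos hα0 m
  have pm1 := omegaW_pos hα0 (m+1)
  nlinarith [mul_le_mul_of_nonneg_left hc p0.le, mul_lt_mul_of_pos_right hs pm]

private lemma constCoeff_ne (hα0 : 0 < α) :
    PowerSeries.constantCoeff (PowerSeries.mk (omegaW α)) ≠ 0 := by
  have := omegaW_pos hα0 0
  simp only [PowerSeries.constantCoeff_mk]
  exact this.ne'

private lemma conv (hα0 : 0 < α) (n : ℕ) :
    ∑ k ∈ Finset.range (n+1), omegaW α k * omegaInv α (n-k)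
      = if n = 0 then 1 else 0 := by
  have hmul := PowerSeries.mul_inv_cancel _ (constCoeff_ne hα0)
  have := congrArg (PowerSeries.coeff n) hmul
  rw [PowerSeries.coeff_mul, PowerSeries.coeff_one,
    Finset.Nat.sum_antidiagonal_eq_sum_range_succ_mk] at this
  simpa [PowerSeries.coeff_mk, omegaInv] using this

private lemma convV (hα0 : 0 < α) (M : ℕ) :
    ∑ k ∈ Finset.range (M+1), omegaW α k * (∑ i ∈ Finset.range (M-k+1), omegaInv α i)
      = 1 := by
  set u : PowerSeries ℝ := PowerSeries.mk (fun _ => (1:ℝ)) with hu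
  have hmul := PowerSeries.mul_inv_cancel _ (constCoeff_ne hα0)
  have h1 : PowerSeries.mk (omegaW α) * ((PowerSeries.mk (omegaW α))⁻¹ * u) = u := by
    rw [← mul_assoc, hmul, one_mul]
  have h2 : ∀ j : ℕ, PowerSeries.coeff j ((PowerSeries.mk (omegaW α))⁻¹ * u)
      = ∑ i ∈ Finset.range (j+1), omegaInv α i := by
    intro j
    rw [PowerSeries.coeff_mul, Finset.Nat.sum_antidiagonal_eq_sum_range_succ_mk]
    simp [hu, PowerSeries.coeff_mk, omegaInv]
  have := congrArg (PowerSeries.coeff M) h1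
  rw [PowerSeries.coeff_mul, Finset.Nat.sum_antidiagonal_eq_sum_range_succ_mk] at this
  simp only [PowerSeries.coeff_mk, h2] at this
  simpa [hu, PowerSeries.coeff_mk] using this

private lemma v0_eq (hα0 : 0 < α) : omegaInv α 0 = Real.Gamma (α+1) := by
  have h := conv hα0 0
  rw [if_pos rfl] at h
  norm_num at h
  rw [omegaW_zero hα0] at h
  have hG := G_pos hα0
  field_simp at h
  linarith

private lemma vneg (hα0 : 0 < α) (hα1 : α < 1) : ∀ n, 1 ≤ n → omegaInv α n < 0 := by
  intro n
  induction n using Nat.strong_induction_on with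
  | _ n ih =>
  intro hn
  have hG := G_pos hα0
  have p0 := omegaW_pos hα0 0
  rcases eq_or_lt_of_le hn with h1 | h2
  · -- n = 1
    have h := conv hα0 1
    rw [if_neg (by omega)] at h
    rw [Finset.sum_range_succ, Finset.sum_range_one] at h
    norm_num at h
    rw [v0_eq hα0] at h
    have p1 := omegaW_pos hα0 1
    rw [← h1]
    nlinarith
  · -- n ≥ 2
    obtain ⟨m, rfl⟩ : ∃ m, n = m + 2 := ⟨n - 2, by omega⟩
    have h1 := conv hα0 (m+2); rw [if_neg (by omega)] at h1
    have h2 := conv hα0 (m+1); rw [if_neg (by omega)] at h2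
    have hcomb : (∑ k ∈ Finset.range (m+2),
        (omegaW α (m+1) * omegaW α (k+1) - omegaW α (m+2) * omegaW α k)
          * omegaInv α (m+1-k))
        + omegaW α (m+1) * omegaW α 0 * omegaInv α (m+2) = 0 := by
      have e1 : omegaW α (m+1) * (∑ k ∈ Finset.range (m+3), omegaW α k * omegaInv α (m+2-k))
          = (∑ k ∈ Finset.range (m+2), omegaW α (m+1) * omegaW α (k+1) * omegaInv α (m+1-k))
            + omegaW α (m+1) * omegaW α 0 * omegaInv α (m+2) := by
        rw [Finset.mul_sum,
          Finset.sum_range_succ' (fun k => omegaW α (m+1) * (omegaW α k * omegaInv α (m+2-k))) (m+2)]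
        congr 1
        · apply Finset.sum_congr rfl
          intro k hk
          have : m+2-(k+1) = m+1-k := by omega
          rw [this]; ring
        · simp [mul_assoc]
      have e2 : omegaW α (m+2) * (∑ k ∈ Finset.range (m+2), omegaW α k * omegaInv α (m+1-k))
          = ∑ k ∈ Finset.range (m+2), omegaW α (m+2) * omegaW α k * omegaInv α (m+1-k) := by
        rw [Finset.mul_sum]
        apply Finset.sum_congr rfl
        intro k hk; ring
      have e3 : (∑ k ∈ Finset.range (m+2),
          (omegaW α (m+1) * omegaW α (k+1) - omegaW α (m+2) * omegaW α k) * omegaInv α (m+1-k))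
          = (∑ k ∈ Finset.range (m+2), omegaW α (m+1) * omegaW α (k+1) * omegaInv α (m+1-k))
            - ∑ k ∈ Finset.range (m+2), omegaW α (m+2) * omegaW α k * omegaInv α (m+1-k) := by
        rw [← Finset.sum_sub_distrib]
        apply Finset.sum_congr rfl
        intro k hk; ring
      rw [h1] at e1
      rw [h2] at e2
      rw [e3]
      linarith [e1, e2]
    have hterm : ∀ k ∈ Finset.range (m+2),
        0 ≤ (omegaW α (m+1) * omegaW α (k+1) - omegaW α (m+2) * omegaW α k)
          * omegaInv α (m+1-k) := by
      intro k hk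
      by_cases hkm : k = m+1
      · subst hkm
        have hz : omegaW α (m+1) * omegaW α (m+1+1) - omegaW α (m+2) * omegaW α (m+1) = 0 := by
          have : omegaW α (m+1+1) = omegaW α (m+2) := rfl
          rw [this]; ring
        rw [hz, zero_mul]
      · have hk' : k ≤ m := by
          have := Finset.mem_range.1 hk
          omega
        have hcross : omegaW α (k+1) * omegaW α (m+1) ≤ omegaW α k * omegaW α (m+2) :=
          cross hα0 hα1 (m+1) k (by omega)
        have hv : omegaInv α (m+1-k) < 0 := ih (m+1-k) (by omega) (by omega)
        have hcf : omegaW α (m+1) * omegaW α (k+1) - omegaW α (m+2) * omegaW α k ≤ 0 := by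
          nlinarith [hcross]
        nlinarith [mul_nonneg (neg_nonneg.2 hcf) (neg_nonneg.2 hv.le)]
    have hstrict : 0 < (omegaW α (m+1) * omegaW α (0+1) - omegaW α (m+2) * omegaW α 0)
        * omegaInv α (m+1-0) := by
      have hc1 : omegaW α (m+1) * omegaW α 1 < omegaW α (m+2) * omegaW α 0 :=
        cross1 hα0 hα1 (by omega)
      have hv : omegaInv α (m+1) < 0 := ih (m+1) (by omega) (by omega)
      simp only [Nat.zero_add, Nat.sub_zero]
      apply mul_pos_of_neg_of_neg _ hv
      linarith [hc1]
    have hsum : 0 < ∑ k ∈ Finset.range (m+2),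
        (omegaW α (m+1) * omegaW α (k+1) - omegaW α (m+2) * omegaW α k)
          * omegaInv α (m+1-k) :=
      Finset.sum_pos' hterm ⟨0, Finset.mem_range.2 (by omega), hstrict⟩
    have pm1 := omegaW_pos hα0 (m+1)
    nlinarith [hsum, hcomb, mul_pos pm1 p0]

private lemma sum_omegaW (hα0 : 0 < α) (N : ℕ) :
    ∑ k ∈ Finset.range N, omegaW α k = (N:ℝ)^α / Real.Gamma (α+1) := by
  unfold omegaW
  rw [← Finset.sum_div]
  congr 1
  calc ∑ k ∈ Finset.range N, (((k:ℝ)+1)^α - (k:ℝ)^α)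
      = ∑ k ∈ Finset.range N, ((((k+1:ℕ)):ℝ)^α - ((k:ℕ):ℝ)^α) := by
        apply Finset.sum_congr rfl
        intro k _
        push_cast
        ring_nf
    _ = ((N:ℕ):ℝ)^α - ((0:ℕ):ℝ)^α := Finset.sum_range_sub (fun k : ℕ => ((k:ℝ))^α) N
    _ = (N:ℝ)^α := by
        norm_num [Real.zero_rpow hα0.ne']

end

section
variable {α : ℝ}

private noncomputable def VV (α : ℝ) (N : ℕ) : ℝ := ∑ i ∈ Finset.range (N+1), omegaInv α i

private lemma VV_anti (hα0 : 0 < α) (hα1 : α < 1) : Antitone (VV α) := by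
  apply antitone_nat_of_succ_le
  intro n
  have h : VV α (n+1) = VV α n + omegaInv α (n+1) := by
    unfold VV
    rw [Finset.sum_range_succ]
  rw [h]
  have := vneg hα0 hα1 (n+1) (by omega)
  linarith

private lemma VV_zero (hα0 : 0 < α) : VV α 0 = Real.Gamma (α+1) := by
  unfold VV
  norm_num
  exact v0_eq hα0

private lemma VV_le (hα0 : 0 < α) (hα1 : α < 1) (M : ℕ) :
    VV α M ≤ Real.Gamma (α+1) / ((M+1:ℕ):ℝ)^α := by
  have hG := G_pos hα0
  have hpow : (0:ℝ) < ((M+1:ℕ):ℝ)^α := Real.rpow_pos_of_pos (by positivity) α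
  have key : VV α M * (((M+1:ℕ):ℝ)^α / Real.Gamma (α+1)) ≤ 1 := by
    calc VV α M * (((M+1:ℕ):ℝ)^α / Real.Gamma (α+1))
        = VV α M * (∑ k ∈ Finset.range (M+1), omegaW α k) := by rw [sum_omegaW hα0]
      _ = ∑ k ∈ Finset.range (M+1), omegaW α k * VV α M := by
          rw [Finset.mul_sum]
          apply Finset.sum_congr rfl
          intro k _; ring
      _ ≤ ∑ k ∈ Finset.range (M+1), omegaW α k * VV α (M-k) := by
          apply Finset.sum_le_sum
          intro k _
          exact mul_le_mul_of_nonneg_left (VV_anti hα0 hα1 (Nat.sub_le M k))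
            (omegaW_pos hα0 k).le
      _ = 1 := convV hα0 M
  rw [le_div_iff₀ hpow]
  have e : VV α M * (((M+1:ℕ):ℝ)^α) = VV α M * (((M+1:ℕ):ℝ)^α / Real.Gamma (α+1))
      * Real.Gamma (α+1) := by field_simp
  rw [e]
  nlinarith [key, hG]

private lemma VV_nonneg (hα0 : 0 < α) (hα1 : α < 1) (N : ℕ) : 0 ≤ VV α N := by
  by_contra hcon
  push_neg at hcon
  have hG := G_pos hα0
  have hV0 : VV α 0 = Real.Gamma (α+1) := VV_zero hα0
  rcases Nat.eq_zero_or_pos N with rfl | hN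
  · rw [hV0] at hcon; linarith
  have hub : ∀ m : ℕ, (1:ℝ) ≤ ((m+1:ℕ):ℝ)^α / Real.Gamma (α+1) * VV α N + N := by
    intro m
    have hid := convV hα0 (N+m)
    have hsplit : (∑ k ∈ Finset.range (N+m+1), omegaW α k * VV α (N+m-k))
        = (∑ k ∈ Finset.range (m+1), omegaW α k * VV α (N+m-k))
          + ∑ k ∈ Finset.Ico (m+1) (N+m+1), omegaW α k * VV α (N+m-k) := by
      simp only [Finset.range_eq_Ico]
      exact (Finset.sum_Ico_consecutive _ (by omega : 0 ≤ m+1) (by omega : m+1 ≤ N+m+1)).symm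
    have hid' : (∑ k ∈ Finset.range (m+1), omegaW α k * VV α (N+m-k))
        + ∑ k ∈ Finset.Ico (m+1) (N+m+1), omegaW α k * VV α (N+m-k) = 1 := by
      rw [← hsplit]
      exact hid
    have part1 : (∑ k ∈ Finset.range (m+1), omegaW α k * VV α (N+m-k))
        ≤ ((m+1:ℕ):ℝ)^α / Real.Gamma (α+1) * VV α N := by
      calc (∑ k ∈ Finset.range (m+1), omegaW α k * VV α (N+m-k))
          ≤ ∑ k ∈ Finset.range (m+1), omegaW α k * VV α N := by
            apply Finset.sum_le_sum
            intro k hk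
            have hk' : k ≤ m := by have := Finset.mem_range.1 hk; omega
            exact mul_le_mul_of_nonneg_left (VV_anti hα0 hα1 (by omega : N ≤ N+m-k))
              (omegaW_pos hα0 k).le
        _ = ((m+1:ℕ):ℝ)^α / Real.Gamma (α+1) * VV α N := by
            rw [← Finset.sum_mul, sum_omegaW hα0]
    have part2 : (∑ k ∈ Finset.Ico (m+1) (N+m+1), omegaW α k * VV α (N+m-k)) ≤ N := by
      calc (∑ k ∈ Finset.Ico (m+1) (N+m+1), omegaW α k * VV α (N+m-k))
          ≤ ∑ _k ∈ Finset.Ico (m+1) (N+m+1), (1:ℝ) := by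
            apply Finset.sum_le_sum
            intro k _
            have h1 : VV α (N+m-k) ≤ VV α 0 := VV_anti hα0 hα1 (Nat.zero_le _)
            have h2 : omegaW α k * VV α (N+m-k) ≤ omegaW α k * VV α 0 :=
              mul_le_mul_of_nonneg_left h1 (omegaW_pos hα0 k).le
            have h3 : omegaW α k * VV α 0 ≤ omegaW α 0 * VV α 0 :=
              mul_le_mul_of_nonneg_right (omegaW_le hα0 hα1 k) (by rw [hV0]; linarith)
            have h4 : omegaW α 0 * VV α 0 = 1 := by
              rw [hV0, omegaW_zero hα0]
              field_simp
            linarith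
        _ = ((N+m+1) - (m+1) : ℕ) * 1 := by
            rw [Finset.sum_const, Nat.card_Ico, nsmul_eq_mul]
        _ = N := by norm_num
    linarith
  -- choose m large
  set C : ℝ := Real.Gamma (α+1) * N / (-(VV α N)) with hC
  have hCnn : 0 ≤ C := by
    apply div_nonneg _ (by linarith)
    positivity
  obtain ⟨mm, hmm⟩ := exists_nat_ge (C^(α⁻¹))
  have hP : C ≤ ((mm+1:ℕ):ℝ)^α := by
    have h1 : C^(α⁻¹) ≤ ((mm+1:ℕ):ℝ) := by push_cast; linarith
    have h2 := Real.rpow_le_rpow (Real.rpow_nonneg hCnn _) h1 hα0.le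
    rwa [Real.rpow_inv_rpow hCnn hα0.ne'] at h2
  have hub' := hub mm
  have hPV : ((mm+1:ℕ):ℝ)^α * VV α N ≤ -(Real.Gamma (α+1) * N) := by
    have hCV : C * (-(VV α N)) = Real.Gamma (α+1) * N := by
      rw [hC]
      exact div_mul_cancel₀ _ (neg_pos.2 hcon).ne'
    nlinarith [hP, hcon]
  have e : ((mm+1:ℕ):ℝ)^α / Real.Gamma (α+1) * VV α N
      = ((mm+1:ℕ):ℝ)^α * VV α N / Real.Gamma (α+1) := by ring
  rw [e] at hub'
  have : ((mm+1:ℕ):ℝ)^α * VV α N / Real.Gamma (α+1) ≤ -(N:ℝ) := by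
    rw [div_le_iff₀ hG]
    nlinarith [hPV]
  linarith

private lemma VV_tendsto (hα0 : 0 < α) (hα1 : α < 1) :
    Filter.Tendsto (VV α) Filter.atTop (nhds 0) := by
  apply squeeze_zero (VV_nonneg hα0 hα1) (VV_le hα0 hα1)
  have h1 : Filter.Tendsto (fun M : ℕ => (((M+1:ℕ)):ℝ)) Filter.atTop Filter.atTop := by
    apply Filter.Tendsto.comp tendsto_natCast_atTop_atTop (Filter.tendsto_add_atTop_nat 1)
  have h2 := (tendsto_rpow_atTop hα0).comp h1
  exact Filter.Tendsto.div_atTop tendsto_const_nhds h2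

end

theorem stmt_3 (α : ℝ) (hα0 : 0 < α) (hα1 : α < 1) :
    0 < omegaInv α 0 ∧
    (∀ n : ℕ, 1 ≤ n → omegaInv α n < 0) ∧
    omegaInv α 0 = Real.Gamma (α + 1) ∧
    HasSum (fun n : ℕ => |omegaInv α (n + 1)|) (Real.Gamma (α + 1)) := by
  have hG := G_pos hα0
  refine ⟨by rw [v0_eq hα0]; exact hG, vneg hα0 hα1, v0_eq hα0, ?_⟩
  have hnn : ∀ n : ℕ, 0 ≤ |omegaInv α (n+1)| := fun n => abs_nonneg _
  rw [hasSum_iff_tendsto_nat_of_nonneg hnn]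
  have hps : ∀ N : ℕ, ∑ n ∈ Finset.range N, |omegaInv α (n+1)|
      = Real.Gamma (α+1) - VV α N := by
    intro N
    have h1 : VV α N = (∑ i ∈ Finset.range N, omegaInv α (i+1)) + omegaInv α 0 :=
      Finset.sum_range_succ' _ N
    have h2 : ∀ n ∈ Finset.range N, |omegaInv α (n+1)| = -omegaInv α (n+1) :=
      fun n _ => abs_of_neg (vneg hα0 hα1 (n+1) (by omega))
    rw [Finset.sum_congr rfl h2, Finset.sum_neg_distrib]
    rw [v0_eq hα0] at h1
    linarith
  have htend : Filter.Tendsto (fun N : ℕ => Real.Gamma (α+1) - VV α N)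
      Filter.atTop (nhds (Real.Gamma (α+1))) := by
    have h := (VV_tendsto hα0 hα1).const_sub (Real.Gamma (α+1))
    simpa using h
  exact Filter.Tendsto.congr (fun N => (hps N).symm) htend
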